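/- Reduction from Max-Reward-Light (submodular case, improved constant): Let (A, f, c) be a multi-agent contract instance with monotone submodular f, let B, B' ∈ (0,1] be budgets, let γ ≥ 1, and let L be the set of light agents. Consider the scaled instance on the agent set L with the same reward f (restricted to subsets of L) and costs c'_i = (B'/B)·c_i; its payment function is p'(T) = Σ_{i∈T} c'_i/f_T(i) for T ⊆ L and its profit is g'(T) = (1 − p'(T))·f(T). Let φ' : 2^L → ℝ≥0 be a BEST objective for the scaled instance. Suppose S ⊆ L satisfies p'(S) ≤ B' and γ·φ'(S) ≥ max{φ'(T) : T ⊆ L, p'(T) ≤ B'}. Then there exists a set T ⊆ L with p(T) ≤ B (payment in the original instance), where T = S or T is a singleton, such that 6γ·f(T) ≥ Max-Reward-Light(B). -/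

import Mathlib

open scoped BigOperators ENNReal
open Finset

/-- Marginal contribution of agent `i` to set `S`: `f_S(i) = f(S) - f(S \ {i})`. -/
noncomputable def marginal {α : Type*} [DecidableEq α] (f : Finset α → ℝ) (S : Finset α)
    (i : α) : ℝ :=
  f S - f (S.erase i)

/-- Payment needed to incentivize `S`, valued in `[0,∞]`, with the conventions
`0/0 = 0` and `x/0 = ∞` for `x > 0` (these hold for ENNReal division). -/
noncomputable def payment {α : Type*} [DecidableEq α] (f : Finset α → ℝ) (c : α → ℝ)
    (S : Finset α) : ℝ≥0∞ :=
  ∑ i ∈ S, ENNReal.ofReal (c i) / ENNReal.ofReal (marginal f S i)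

/-- The principal's profit from incentivizing `S`: `g(S) = (1 - p(S)) · f(S)`. -/
noncomputable def profit {α : Type*} [DecidableEq α] (f : Finset α → ℝ) (c : α → ℝ)
    (S : Finset α) : ℝ :=
  (1 - (payment f c S).toReal) * f S

/-- `f` is monotone. -/
def IsMonotoneFn {α : Type*} (f : Finset α → ℝ) : Prop :=
  ∀ ⦃S T : Finset α⦄, S ⊆ T → f S ≤ f T

/-- `f` is subadditive. -/
def IsSubadditive {α : Type*} [DecidableEq α] (f : Finset α → ℝ) : Prop :=
  ∀ S T : Finset α, f (S ∪ T) ≤ f S + f T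

/-- `f` is submodular (decreasing marginal values). -/
def IsSubmodular {α : Type*} [DecidableEq α] (f : Finset α → ℝ) : Prop :=
  ∀ ⦃S T : Finset α⦄, S ⊆ T → ∀ i ∉ T, f (insert i T) - f T ≤ f (insert i S) - f S

/-- `f` is additive. -/
def IsAdditive {α : Type*} [DecidableEq α] (f : Finset α → ℝ) : Prop :=
  ∀ S : Finset α, f S = ∑ i ∈ S, f {i}

/-- `f` is XOS: a finite max of nonnegative additive functions. -/
def IsXOS {α : Type*} (f : Finset α → ℝ) : Prop :=
  ∃ (k : ℕ) (a : Fin (k + 1) → α → ℝ),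
    (∀ j i, 0 ≤ a j i) ∧
    ∀ S : Finset α, f S = Finset.univ.sup' Finset.univ_nonempty (fun j => ∑ i ∈ S, a j i)

/-- Agent `i` is light: it can be incentivized with payment at most `1/2`. -/
def isLight {α : Type*} [DecidableEq α] (f : Finset α → ℝ) (c : α → ℝ) (i : α) : Prop :=
  payment f c {i} ≤ ENNReal.ofReal (1 / 2)

/-- `S` is budget-feasible for budget `B`. -/
def feasible {α : Type*} [DecidableEq α] (f : Finset α → ℝ) (c : α → ℝ) (B : ℝ)
    (S : Finset α) : Prop :=
  payment f c S ≤ ENNReal.ofReal B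

/-- `S` is a budget-feasible set of light agents. -/
def feasibleLight {α : Type*} [DecidableEq α] (f : Finset α → ℝ) (c : α → ℝ) (B : ℝ)
    (S : Finset α) : Prop :=
  (∀ i ∈ S, isLight f c i) ∧ payment f c S ≤ ENNReal.ofReal B

/-- The maximum (supremum) value of objective `φ` over sets satisfying `P`. -/
noncomputable def maxVal {α : Type*} (φ : Finset α → ℝ) (P : Finset α → Prop) : ℝ :=
  sSup (φ '' {S | P S})

/-- `φ` is a BEST objective for the instance `(f, c)`: it is nonnegative, sandwiched between
profit and reward, and satisfies `φ(S) ≤ f(S \ {i}) + φ({i})` for `i ∈ S`. -/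
def IsBEST {α : Type*} [DecidableEq α] (f : Finset α → ℝ) (c : α → ℝ)
    (φ : Finset α → ℝ) : Prop :=
  (∀ S, 0 ≤ φ S) ∧
  (∀ S, φ S ≤ f S) ∧
  (∀ S, payment f c S ≤ 1 → (1 - (payment f c S).toReal) * f S ≤ φ S) ∧
  (∀ S, ∀ i ∈ S, φ S ≤ f (S.erase i) + φ {i})

/-- `φ` is a BEST objective for the instance `(f, c)` restricted to sets satisfying `P`. -/
def IsBESTOn {α : Type*} [DecidableEq α] (f : Finset α → ℝ) (c : α → ℝ)
    (P : Finset α → Prop) (φ : Finset α → ℝ) : Prop :=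
  (∀ S, P S → 0 ≤ φ S) ∧
  (∀ S, P S → φ S ≤ f S) ∧
  (∀ S, P S → payment f c S ≤ 1 → (1 - (payment f c S).toReal) * f S ≤ φ S) ∧
  (∀ S, P S → ∀ i ∈ S, φ S ≤ f (S.erase i) + φ {i})

section Aux
variable {α : Type*} [DecidableEq α]

lemma marginal_nonneg {f : Finset α → ℝ} (hmono : IsMonotoneFn f) (S : Finset α) (i : α) :
    0 ≤ marginal f S i :=
  sub_nonneg.2 (hmono (Finset.erase_subset _ _))

lemma marginal_anti {f : Finset α → ℝ} (hsub : IsSubmodular f) {G T : Finset α}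
    (hGT : G ⊆ T) {i : α} (hi : i ∈ G) : marginal f T i ≤ marginal f G i := by
  have h := hsub (Finset.erase_subset_erase i hGT) i (Finset.notMem_erase i T)
  rwa [Finset.insert_erase (hGT hi), Finset.insert_erase hi] at h

lemma payment_mono_subset {f : Finset α → ℝ} {c : α → ℝ}
    (hsub : IsSubmodular f) {G T : Finset α} (hGT : G ⊆ T) :
    payment f c G ≤ payment f c T := by
  unfold payment
  refine le_trans (Finset.sum_le_sum fun i hi => ?_)
    (Finset.sum_le_sum_of_subset_of_nonneg hGT fun _ _ _ => zero_le)
  exact ENNReal.div_le_div_left (ENNReal.ofReal_le_ofReal (marginal_anti hsub hGT hi)) _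

lemma subadd_of_submod {f : Finset α → ℝ} (hmono : IsMonotoneFn f) (hsub : IsSubmodular f)
    (hf0 : f ∅ = 0) : IsSubadditive f := by
  intro S T
  induction S using Finset.induction_on with
  | empty => simpa [hf0]
  | @insert a S' ha ih =>
    rw [Finset.insert_union]
    by_cases haT : a ∈ S' ∪ T
    · rw [Finset.insert_eq_self.mpr haT]
      have := hmono (Finset.subset_insert a S')
      linarith
    · have h := hsub (Finset.subset_union_left (s₂ := T)) a haT
      have h2 := ih
      linarith

lemma payment_scale {f : Finset α → ℝ} {c : α → ℝ} {t : ℝ} (ht : 0 ≤ t) (X : Finset α) :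
    payment f (fun i => t * c i) X = ENNReal.ofReal t * payment f c X := by
  unfold payment
  rw [Finset.mul_sum]
  refine Finset.sum_congr rfl fun i _ => ?_
  rw [ENNReal.ofReal_mul ht, mul_div_assoc]

end Aux

/-- **Reduction from Max-Reward-Light (submodular case, improved constant).**
The scaled instance lives on the set of light agents `L` (encoded by the predicate
`∀ i ∈ S, isLight f c i`), with the same reward `f` and costs scaled by `B'/B`. -/
theorem reduction_from_mrl_submodular {α : Type*} [DecidableEq α] [Fintype α]
    (f : Finset α → ℝ) (c : α → ℝ) (φ' : Finset α → ℝ)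
    (hf01 : ∀ S, f S ∈ Set.Icc (0 : ℝ) 1) (hf0 : f ∅ = 0)
    (hmono : IsMonotoneFn f) (hsubmod : IsSubmodular f) (hc : ∀ i, 0 ≤ c i)
    (B B' : ℝ) (hB0 : 0 < B) (hB1 : B ≤ 1) (hB'0 : 0 < B') (hB'1 : B' ≤ 1)
    (γ : ℝ) (hγ : 1 ≤ γ)
    (hφ' : IsBESTOn f (fun i => (B' / B) * c i) (fun S => ∀ i ∈ S, isLight f c i) φ')
    (S : Finset α) (hSL : ∀ i ∈ S, isLight f c i)
    (hSfeas : payment f (fun i => (B' / B) * c i) S ≤ ENNReal.ofReal B')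
    (hSapprox :
      maxVal φ' (fun T => (∀ i ∈ T, isLight f c i) ∧
        payment f (fun i => (B' / B) * c i) T ≤ ENNReal.ofReal B') ≤ γ * φ' S) :
    ∃ T : Finset α,
      (∀ i ∈ T, isLight f c i) ∧
      payment f c T ≤ ENNReal.ofReal B ∧
      (T = S ∨ T.card = 1) ∧
      maxVal f (feasibleLight f c B) ≤ 6 * γ * f T := by
  classical
  set c' : α → ℝ := fun i => (B' / B) * c i with hc'def
  have htnn : (0:ℝ) ≤ B' / B := div_nonneg hB'0.le hB0.le
  have hc'nn : ∀ i, 0 ≤ c' i := fun i => mul_nonneg htnn (hc i)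
  -- scaled feasibility iff original feasibility
  have hBfac : ENNReal.ofReal B' = ENNReal.ofReal (B' / B) * ENNReal.ofReal B := by
    rw [← ENNReal.ofReal_mul htnn]
    congr 1
    field_simp
  have hscale : ∀ X : Finset α,
      payment f c' X ≤ ENNReal.ofReal B' ↔ payment f c X ≤ ENNReal.ofReal B := by
    intro X
    rw [payment_scale htnn, hBfac, ENNReal.mul_le_mul_iff_right
      (ne_of_gt (ENNReal.ofReal_pos.mpr (div_pos hB'0 hB0))) ENNReal.ofReal_ne_top]
  -- the candidate output sets
  set Cands : Finset (Finset α) := insert S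
    ((Finset.univ.filter
      (fun i => isLight f c i ∧ payment f c {i} ≤ ENNReal.ofReal B)).image
      (fun i => ({i} : Finset α))) with hCands
  obtain ⟨T₀, hT₀mem, hT₀max⟩ := Finset.exists_max_image Cands f ⟨S, Finset.mem_insert_self _ _⟩
  have hfS_le : f S ≤ f T₀ := hT₀max S (Finset.mem_insert_self _ _)
  have hT₀nn : 0 ≤ f T₀ := (hf01 T₀).1
  have hφ'S_le : φ' S ≤ f T₀ := le_trans (hφ'.2.1 S hSL) hfS_le
  have hsing_le : ∀ i : α, isLight f c i → payment f c {i} ≤ ENNReal.ofReal B →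
      f {i} ≤ f T₀ := by
    intro i hl hp
    refine hT₀max {i} (Finset.mem_insert_of_mem ?_)
    exact Finset.mem_image.mpr ⟨i, Finset.mem_filter.mpr ⟨Finset.mem_univ i, hl, hp⟩, rfl⟩
  have hbdd : BddAbove (φ' '' {T | (∀ i ∈ T, isLight f c i) ∧
      payment f c' T ≤ ENNReal.ofReal B'}) := by
    refine ⟨1, ?_⟩
    rintro x ⟨X, hX, rfl⟩
    exact le_trans (hφ'.2.1 X hX.1) (hf01 X).2
  refine ⟨T₀, ?_, ?_, ?_, ?_⟩
  · rcases Finset.mem_insert.1 hT₀mem with h | h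
    · exact h ▸ hSL
    · obtain ⟨i, hi, rfl⟩ := Finset.mem_image.1 h
      intro j hj
      rw [Finset.mem_singleton] at hj
      subst hj
      exact (Finset.mem_filter.1 hi).2.1
  · rcases Finset.mem_insert.1 hT₀mem with h | h
    · rw [h]; exact (hscale S).1 hSfeas
    · obtain ⟨i, hi, rfl⟩ := Finset.mem_image.1 h
      exact (Finset.mem_filter.1 hi).2.2
  · rcases Finset.mem_insert.1 hT₀mem with h | h
    · exact Or.inl h
    · obtain ⟨i, hi, rfl⟩ := Finset.mem_image.1 h
      exact Or.inr (Finset.card_singleton i)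
  -- the main bound
  refine Real.sSup_le ?_ (by positivity)
  rintro x ⟨T, hT, rfl⟩
  obtain ⟨hTL, hTfeas⟩ := hT
  have hTfeas' : payment f c' T ≤ ENNReal.ofReal B' := (hscale T).2 hTfeas
  have hTne : payment f c' T ≠ ⊤ :=
    ne_top_of_le_ne_top ENNReal.ofReal_ne_top hTfeas'
  -- the real-valued payment shares
  set r : α → ℝ := fun i => if 0 < marginal f T i then c' i / marginal f T i else 0 with hrdef
  have hr0 : ∀ i, 0 ≤ r i := by
    intro i
    rw [hrdef]
    dsimp only
    split
    · exact div_nonneg (hc'nn i) (by linarith [marginal_nonneg hmono T i])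
    · exact le_rfl
  have hterm : ∀ i ∈ T,
      ENNReal.ofReal (c' i) / ENNReal.ofReal (marginal f T i) = ENNReal.ofReal (r i) := by
    intro i hi
    have hle : ENNReal.ofReal (c' i) / ENNReal.ofReal (marginal f T i) ≤ payment f c' T :=
      Finset.single_le_sum (f := fun i => ENNReal.ofReal (c' i) /
        ENNReal.ofReal (marginal f T i)) (fun _ _ => zero_le) hi
    by_cases h : 0 < marginal f T i
    · rw [hrdef]
      dsimp only
      rw [if_pos h, ENNReal.ofReal_div_of_pos h]
    · have hm0 : ENNReal.ofReal (marginal f T i) = 0 :=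
        ENNReal.ofReal_eq_zero.mpr (le_of_not_gt h)
      have hcz : ENNReal.ofReal (c' i) = 0 := by
        by_contra hne
        rw [hm0, ENNReal.div_zero hne] at hle
        exact hTne (top_le_iff.mp hle)
      rw [hrdef]
      dsimp only
      rw [if_neg h, hcz, hm0, ENNReal.zero_div, ENNReal.ofReal_zero]
  have hsumr : ∑ i ∈ T, r i ≤ B' := by
    have : payment f c' T = ENNReal.ofReal (∑ i ∈ T, r i) := by
      rw [ENNReal.ofReal_sum_of_nonneg (fun i _ => hr0 i)]
      unfold payment
      exact Finset.sum_congr rfl hterm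
    rw [this] at hTfeas'
    exact (ENNReal.ofReal_le_ofReal_iff hB'0.le).mp hTfeas'
  -- payment of any subgroup is at most its r-sum
  have hgroup : ∀ G : Finset α, G ⊆ T →
      payment f c' G ≤ ENNReal.ofReal (∑ i ∈ G, r i) := by
    intro G hGT
    rw [ENNReal.ofReal_sum_of_nonneg (fun i _ => hr0 i)]
    unfold payment
    refine Finset.sum_le_sum fun i hi => ?_
    rw [← hterm i (hGT hi)]
    exact ENNReal.div_le_div_left (ENNReal.ofReal_le_ofReal (marginal_anti hsubmod hGT hi)) _
  -- any subgroup with r-sum at most B'/2 has reward at most 2γφ'(S)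
  have hGbound : ∀ G : Finset α, G ⊆ T → ∑ i ∈ G, r i ≤ B' / 2 →
      f G ≤ 2 * (γ * φ' S) := by
    intro G hGT hs
    have hlight : ∀ i ∈ G, isLight f c i := fun i hi => hTL i (hGT hi)
    have hpG : payment f c' G ≤ ENNReal.ofReal (B' / 2) :=
      le_trans (hgroup G hGT) (ENNReal.ofReal_le_ofReal hs)
    have hpG1 : payment f c' G ≤ 1 :=
      le_trans hpG (ENNReal.ofReal_le_one.mpr (by linarith))
    have hprof := hφ'.2.2.1 G hlight hpG1
    have htr : (payment f c' G).toReal ≤ B' / 2 :=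
      ENNReal.toReal_le_of_le_ofReal (by linarith) hpG
    have hfG0 : 0 ≤ f G := (hf01 G).1
    have h2 : (1/2 : ℝ) * f G ≤ φ' G := by nlinarith
    have hmem : φ' G ≤ maxVal φ' (fun X => (∀ i ∈ X, isLight f c i) ∧
        payment f c' X ≤ ENNReal.ofReal B') := by
      refine le_csSup hbdd ⟨G, ⟨hlight, le_trans hpG
        (ENNReal.ofReal_le_ofReal (by linarith))⟩, rfl⟩
    have := le_trans hmem hSapprox
    linarith
  by_cases hheavy : ∃ h ∈ T, B' / 2 < r h
  · -- heavy case: T = {h} ∪ (T.erase h)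
    obtain ⟨h, hhT, hh⟩ := hheavy
    have hGsum : ∑ i ∈ T.erase h, r i ≤ B' / 2 := by
      have e := Finset.add_sum_erase T r hhT
      linarith
    have hsplit : f T ≤ f {h} + f (T.erase h) := by
      have : ({h} : Finset α) ∪ T.erase h = T := by
        rw [← Finset.insert_eq, Finset.insert_erase hhT]
      calc f T = f (({h} : Finset α) ∪ T.erase h) := by rw [this]
        _ ≤ f {h} + f (T.erase h) := subadd_of_submod hmono hsubmod hf0 _ _
    have hfh : f {h} ≤ f T₀ := by
      refine hsing_le h (hTL h hhT) ?_
      exact le_trans (payment_mono_subset hsubmod (Finset.singleton_subset_iff.mpr hhT)) hTfeas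
    have hG := hGbound (T.erase h) (Finset.erase_subset _ _) hGsum
    nlinarith [hφ'S_le, hT₀nn]
  · push_neg at hheavy
    -- all shares small: find a maximum-cardinality subgroup with r-sum ≤ B'/2
    have hne : (T.powerset.filter (fun G => ∑ i ∈ G, r i ≤ B' / 2)).Nonempty := by
      refine ⟨∅, Finset.mem_filter.mpr ⟨Finset.empty_mem_powerset T, ?_⟩⟩
      simp
      linarith
    obtain ⟨G, hGmem, hGmax⟩ := Finset.exists_max_image _ Finset.card hne
    obtain ⟨hGT, hGsum⟩ := Finset.mem_filter.1 hGmem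
    rw [Finset.mem_powerset] at hGT
    rcases Finset.eq_empty_or_nonempty (T \ G) with hTG | ⟨j, hj⟩
    · have hGeqT : G = T :=
        Finset.Subset.antisymm hGT (by
          intro x hx
          by_contra hxG
          exact absurd (Finset.mem_sdiff.mpr ⟨hx, hxG⟩) (by rw [hTG]; simp))
      have := hGbound T le_rfl (hGeqT ▸ hGsum)
      nlinarith [hφ'S_le, hT₀nn]
    · obtain ⟨hjT, hjG⟩ := Finset.mem_sdiff.1 hj
      have hjbig : B' / 2 < ∑ i ∈ G, r i + r j := by
        by_contra hle
        push_neg at hle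
        have hmem2 : insert j G ∈ T.powerset.filter (fun G => ∑ i ∈ G, r i ≤ B' / 2) := by
          refine Finset.mem_filter.mpr ⟨Finset.mem_powerset.mpr ?_, ?_⟩
          · exact Finset.insert_subset hjT hGT
          · rw [Finset.sum_insert hjG]; linarith
        have := hGmax _ hmem2
        rw [Finset.card_insert_of_notMem hjG] at this
        omega
      set R := (T \ G).erase j with hRdef
      have hRT : R ⊆ T := le_trans (Finset.erase_subset _ _) (Finset.sdiff_subset)
      have hsum_split : ∑ i ∈ T, r i = ∑ i ∈ G, r i + (r j + ∑ i ∈ R, r i) := by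
        have e1 : r j + ∑ i ∈ R, r i = ∑ i ∈ (T \ G), r i := Finset.add_sum_erase _ r hj
        have e2 : ∑ i ∈ (T \ G), r i + ∑ i ∈ G, r i = ∑ i ∈ T, r i := Finset.sum_sdiff hGT
        linarith
      have hRsum : ∑ i ∈ R, r i ≤ B' / 2 := by
        have := hsumr
        rw [hsum_split] at this
        linarith
      have hjsum : ∑ i ∈ ({j} : Finset α), r i ≤ B' / 2 := by
        rw [Finset.sum_singleton]
        exact hheavy j hjT
      have hsplit : f T ≤ f G + (f {j} + f R) := by
        have h1 : G ∪ (T \ G) = T := Finset.union_sdiff_of_subset hGT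
        have h2 : ({j} : Finset α) ∪ R = T \ G := by
          rw [← Finset.insert_eq, hRdef, Finset.insert_erase hj]
        calc f T = f (G ∪ (T \ G)) := by rw [h1]
          _ ≤ f G + f (T \ G) := subadd_of_submod hmono hsubmod hf0 _ _
          _ = f G + f (({j} : Finset α) ∪ R) := by rw [h2]
          _ ≤ f G + (f {j} + f R) := by
              linarith [subadd_of_submod hmono hsubmod hf0 ({j} : Finset α) R]
      have hG1 := hGbound G hGT hGsum
      have hG2 := hGbound {j} (Finset.singleton_subset_iff.mpr hjT) hjsum
      have hG3 := hGbound R hRT hRsum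
      nlinarith [hφ'S_le, hT₀nn]
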